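/- Let ξ : [0, Y₀) → ℝ be a C² solution of ξ''(y) + (1/4)ξ'(y) − (1/(2y)) ξ(y) ξ'(y) = 0 on (0, Y₀) with ξ(0) = 0 and ξ'(0) = a. If a > 1/2, then ξ'(y) > 1/2 for all y ∈ [0, Y₀). -/

import Mathlib

/-- If ξ solves ξ'' + ξ'/4 - ξξ'/(2y) = 0 on (0,Y₀) with ξ(0) = 0, ξ'(0) = a > 1/2,
then ξ'(y) > 1/2 on [0,Y₀). -/
theorem profile_derivative_above_half (Y₀ a : ℝ) (hY₀ : 0 < Y₀)
    (ξ ξ' ξ'' : ℝ → ℝ)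
    (hcont : ContinuousOn ξ (Set.Ico 0 Y₀))
    (hcont' : ContinuousOn ξ' (Set.Ico 0 Y₀))
    (hderiv0 : HasDerivWithinAt ξ (ξ' 0) (Set.Ici 0) 0)
    (hderiv : ∀ y ∈ Set.Ioo (0 : ℝ) Y₀, HasDerivAt ξ (ξ' y) y)
    (hderiv' : ∀ y ∈ Set.Ioo (0 : ℝ) Y₀, HasDerivAt ξ' (ξ'' y) y)
    (heq : ∀ y ∈ Set.Ioo (0 : ℝ) Y₀,
      ξ'' y + (1 / 4) * ξ' y - (1 / (2 * y)) * ξ y * ξ' y = 0)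
    (hξ0 : ξ 0 = 0) (ha : ξ' 0 = a) (hahalf : 1 / 2 < a) :
    ∀ y ∈ Set.Ico (0 : ℝ) Y₀, 1 / 2 < ξ' y := by
  by_contra h
  push_neg at h
  obtain ⟨s, hs, hs2⟩ := h
  set S : Set ℝ := Set.Icc 0 s ∩ ξ' ⁻¹' Set.Iic (1/2) with hSdef
  have hsub : Set.Icc 0 s ⊆ Set.Ico 0 Y₀ := fun x hx => ⟨hx.1, lt_of_le_of_lt hx.2 hs.2⟩
  have hSclosed : IsClosed S :=
    (hcont'.mono hsub).preimage_isClosed_of_isClosed isClosed_Icc isClosed_Iic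
  have hSne : S.Nonempty := ⟨s, ⟨hs.1, le_refl s⟩, hs2⟩
  have hbdd : BddBelow S := ⟨0, fun x hx => hx.1.1⟩
  set t := sInf S with htdef
  have htS : t ∈ S := hSclosed.csInf_mem hSne hbdd
  have ht0 : 0 ≤ t := htS.1.1
  have hts : t ≤ s := htS.1.2
  have htY : t < Y₀ := lt_of_le_of_lt hts hs.2
  have ht'le : ξ' t ≤ 1/2 := htS.2
  have htpos : 0 < t := by
    rcases ht0.lt_or_eq with h | h
    · exact h
    · exfalso; rw [← h] at ht'le; rw [ha] at ht'le; linarith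
  -- below t, ξ' > 1/2
  have hgt : ∀ y, 0 ≤ y → y < t → 1/2 < ξ' y := by
    intro y h0 hyt
    by_contra hle
    push_neg at hle
    have hyS : y ∈ S := ⟨⟨h0, hyt.le.trans hts⟩, hle⟩
    exact absurd (csInf_le hbdd hyS) (not_le.mpr hyt)
  have hIooY : Set.Ioo (0:ℝ) t ⊆ Set.Ioo 0 Y₀ := fun x hx => ⟨hx.1, hx.2.trans htY⟩
  -- ξ y > y/2 on (0,t)
  have hξlb : ∀ y ∈ Set.Ioo (0:ℝ) t, y/2 < ξ y := by
    have hmono : StrictMonoOn (fun y => ξ y - y/2) (Set.Icc 0 t) := by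
      apply StrictMonoOn.mono (s := Set.Icc 0 t) ?_ (le_refl _)
      apply strictMonoOn_of_deriv_pos (convex_Icc 0 t)
      · exact ((hcont.mono (fun x hx => hsub ⟨hx.1, hx.2.trans hts⟩)).sub
          ((continuous_id.div_const 2).continuousOn))
      · intro x hx
        rw [interior_Icc] at hx
        have hd : HasDerivAt (fun y => ξ y - y/2) (ξ' x - 1/2) x := by
          exact (hderiv x (hIooY hx)).sub ((hasDerivAt_id' x).div_const 2)
        rw [hd.deriv]
        have := hgt x hx.1.le hx.2
        linarith
    intro y hy
    have h0 : (0:ℝ) ∈ Set.Icc (0:ℝ) t := ⟨le_refl 0, ht0⟩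
    have hyI : y ∈ Set.Icc (0:ℝ) t := ⟨hy.1.le, hy.2.le⟩
    have := hmono h0 hyI hy.1
    simp [hξ0] at this
    linarith
  -- ξ'' > 0 on (0,t)
  have hξ''pos : ∀ y ∈ Set.Ioo (0:ℝ) t, 0 < ξ'' y := by
    intro y hy
    have hy0 : 0 < y := hy.1
    have he := heq y (hIooY hy)
    have hlb := hξlb y hy
    have hgt' := hgt y hy0.le hy.2
    have hinv : 0 < 1/(2*y) := by positivity
    have hkey : (1:ℝ)/4 < (1/(2*y)) * ξ y := by
      have : (1/(2*y)) * (y/2) = 1/4 := by field_simp; ring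
      calc (1:ℝ)/4 = (1/(2*y)) * (y/2) := this.symm
        _ < (1/(2*y)) * ξ y := by exact mul_lt_mul_of_pos_left hlb hinv
    have : ξ'' y = ξ' y * ((1/(2*y)) * ξ y - 1/4) := by ring_nf; ring_nf at he; linarith
    rw [this]
    exact mul_pos (by linarith) (by linarith)
  -- ξ' strictly monotone on [0,t], contradiction
  have hmono' : StrictMonoOn ξ' (Set.Icc 0 t) := by
    apply strictMonoOn_of_deriv_pos (convex_Icc 0 t)
    · exact hcont'.mono (fun x hx => hsub ⟨hx.1, hx.2.trans hts⟩)
    · intro x hx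
      rw [interior_Icc] at hx
      rw [(hderiv' x (hIooY hx)).deriv]
      exact hξ''pos x hx
  have := hmono' ⟨le_refl 0, ht0⟩ ⟨ht0, le_refl t⟩ htpos
  rw [ha] at this
  linarith
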